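/- Let V be a real inner product space and x ∈ V. Define the bracket [ξ,η] = ⟨η,x⟩•ξ − ⟨ξ,x⟩•η on V, and on ℝⁿ ⊕ ℝ (with ℝⁿ identified with the orthogonal complement of x, assuming ‖x‖=1) the semidirect-sum bracket [(ξ,λ),(η,μ)] = (μ•ξ − λ•η, 0). Then the linear map F(ξ) = (ξ − ⟨ξ,x⟩•x, ⟨ξ,x⟩) is a bijective Lie algebra homomorphism: F([ξ,η]) = [F(ξ), F(η)]. -/

import Mathlib

open RealInnerProductSpace

/-- The map `F(ξ) = (ξ − ⟨ξ,x⟩•x, ⟨ξ,x⟩)` is a linear bijection onto `(x)ᗮ × ℝ`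
taking the bracket `[ξ,η] = ⟨η,x⟩•ξ − ⟨ξ,x⟩•η` to the semidirect-sum bracket
`[(u,λ),(v,μ)] = (μ•u − λ•v, 0)`. -/
theorem stmt_2 {V : Type*} [NormedAddCommGroup V] [InnerProductSpace ℝ V]
    (x : V) (hx : ‖x‖ = 1)
    (b : V → V → V) (hb : ∀ ξ η : V, b ξ η = ⟪η, x⟫ • ξ - ⟪ξ, x⟫ • η)
    (F : V → V × ℝ) (hF : ∀ ξ : V, F ξ = (ξ - ⟪ξ, x⟫ • x, ⟪ξ, x⟫)) :
    (∀ ξ : V, (F ξ).1 ∈ (ℝ ∙ x)ᗮ) ∧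
    (∀ ξ η : V, F (ξ + η) = F ξ + F η) ∧
    (∀ (c : ℝ) (ξ : V), F (c • ξ) = c • F ξ) ∧
    Function.Injective F ∧
    (∀ u : V, ∀ lam : ℝ, u ∈ (ℝ ∙ x)ᗮ → ∃ ξ : V, F ξ = (u, lam)) ∧
    (∀ ξ η : V, F (b ξ η) = ((F η).2 • (F ξ).1 - (F ξ).2 • (F η).1, 0)) := by
  have hxx : ⟪x, x⟫ = (1 : ℝ) := by
    rw [real_inner_self_eq_norm_sq, hx]; norm_num
  refine ⟨?_, ?_, ?_, ?_, ?_, ?_⟩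
  · intro ξ
    rw [hF, Submodule.mem_orthogonal_singleton_iff_inner_right]
    simp [inner_sub_right, inner_smul_right, hxx, hx, real_inner_comm x ξ]
  · intro ξ η
    simp only [hF, inner_add_left, Prod.mk_add_mk]
    congr 1
    module
  · intro c ξ
    simp only [hF, real_inner_smul_left, Prod.smul_mk, smul_eq_mul]
    congr 1
    module
  · intro ξ η h
    rw [hF, hF, Prod.mk.injEq] at h
    obtain ⟨h1, h2⟩ := h
    rw [h2] at h1
    have : ξ - ⟪η, x⟫ • x + ⟪η, x⟫ • x = η - ⟪η, x⟫ • x + ⟪η, x⟫ • x := by rw [h1]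
    simpa using this
  · intro u lam hu
    rw [Submodule.mem_orthogonal_singleton_iff_inner_right] at hu
    refine ⟨u + lam • x, ?_⟩
    rw [hF]
    have hu' : ⟪u, x⟫ = 0 := by rw [real_inner_comm]; exact hu
    have : ⟪u + lam • x, x⟫ = lam := by
      simp [inner_add_left, real_inner_smul_left, hxx, hx, hu']
    rw [this]
    congr 1
    module
  · intro ξ η
    simp only [hF, hb]
    have h2 : ⟪⟪η, x⟫ • ξ - ⟪ξ, x⟫ • η, x⟫ = 0 := by
      simp [inner_sub_left, inner_smul_left]; ring
    rw [h2, Prod.mk.injEq]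
    refine ⟨?_, rfl⟩
    simp only [smul_sub]
    module
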